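/- Every γ-min stable matching in a bipartite graph with preference valuations is γ-popular. -/

import Mathlib

open Finset
open scoped Classical
noncomputable section

/-- A bipartite preference instance: bipartite (multi)graph `G=(U,W;E)` where each
edge `e` has endpoints `src e ∈ U`, `dst e ∈ W`, and every vertex has a preference
valuation over edges (only values on incident edges are relevant); the valuation of
being unmatched (`∅`) is `0`. -/
structure PrefInst (U W E : Type) where
  src : E → U
  dst : E → W
  pU : U → E → ℝ
  pW : W → E → ℝ

namespace PrefInst

variable {U W E : Type} [DecidableEq U] [DecidableEq W] [DecidableEq E]

/-- `M` is a matching: no two distinct edges of `M` share an endpoint. -/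
def IsMatching (I : PrefInst U W E) (M : Finset E) : Prop :=
  ∀ e ∈ M, ∀ f ∈ M, e ≠ f → I.src e ≠ I.src f ∧ I.dst e ≠ I.dst f

/-- The edge of `M` incident to `u ∈ U` (if any): `M(u)`. -/
def mU (I : PrefInst U W E) (M : Finset E) (u : U) : Option E :=
  (M.filter fun e => I.src e = u).toList.head?

/-- The edge of `M` incident to `w ∈ W` (if any): `M(w)`. -/
def mW (I : PrefInst U W E) (M : Finset E) (w : W) : Option E :=
  (M.filter fun e => I.dst e = w).toList.head?

/-- Valuation by `u` of a possible partner edge, with `p_u(∅) = 0`. -/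
def valU (I : PrefInst U W E) (u : U) : Option E → ℝ
  | none => 0
  | some e => I.pU u e

def valW (I : PrefInst U W E) (w : W) : Option E → ℝ
  | none => 0
  | some e => I.pW w e

/-- `M` is maximal: no edge can be added keeping it a matching. -/
def Maximal (I : PrefInst U W E) (M : Finset E) : Prop :=
  ∀ e ∉ M, ¬ I.IsMatching (insert e M)

/-- Edge `e ∉ M` blocks `M` in the weak-stability sense: both endpoints strictly improve. -/
def Blocks (I : PrefInst U W E) (M : Finset E) (e : E) : Prop :=
  e ∉ M ∧ I.valU (I.src e) (I.mU M (I.src e)) < I.pU (I.src e) e ∧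
    I.valW (I.dst e) (I.mW M (I.dst e)) < I.pW (I.dst e) e

/-- Weak stability: no blocking edge. -/
def WeaklyStable (I : PrefInst U W E) (M : Finset E) : Prop :=
  ∀ e, ¬ I.Blocks M e

/-- Edge `e ∉ M` γ-min blocks `M`: both endpoints improve by at least their γ-threshold. -/
def GBlocks (I : PrefInst U W E) (γU γW : E → ℝ) (M : Finset E) (e : E) : Prop :=
  e ∉ M ∧ I.valU (I.src e) (I.mU M (I.src e)) + γU e ≤ I.pU (I.src e) e ∧
    I.valW (I.dst e) (I.mW M (I.dst e)) + γW e ≤ I.pW (I.dst e) e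

/-- γ-min stability: no γ-min blocking edge. -/
def GMinStable (I : PrefInst U W E) (γU γW : E → ℝ) (M : Finset E) : Prop :=
  ∀ e, ¬ I.GBlocks γU γW M e

/-- Standard vote of `u` comparing `M` to `N`: `+1` if strictly better in `M`,
`-1` if strictly better in `N`, `0` on equal value. -/
def sVoteU (I : PrefInst U W E) (M N : Finset E) (u : U) : ℤ :=
  if I.valU u (I.mU M u) = I.valU u (I.mU N u) then 0
  else if I.valU u (I.mU M u) < I.valU u (I.mU N u) then -1 else 1

def sVoteW (I : PrefInst U W E) (M N : Finset E) (w : W) : ℤ :=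
  if I.valW w (I.mW M w) = I.valW w (I.mW N w) then 0
  else if I.valW w (I.mW M w) < I.valW w (I.mW N w) then -1 else 1

/-- Weak vote of `u`: `0` if same partner, `-1` on strict improvement in `N`,
`+1` otherwise (partner changed without strict improvement). -/
def wVoteU (I : PrefInst U W E) (M N : Finset E) (u : U) : ℤ :=
  if I.mU M u = I.mU N u then 0
  else if I.valU u (I.mU M u) < I.valU u (I.mU N u) then -1 else 1

def wVoteW (I : PrefInst U W E) (M N : Finset E) (w : W) : ℤ :=
  if I.mW M w = I.mW N w then 0
  else if I.valW w (I.mW M w) < I.valW w (I.mW N w) then -1 else 1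

/-- Super vote of `u`: `0` if same partner, `-1` if the new partner is weakly
preferred (and different), `+1` only on strict worsening. -/
def supVoteU (I : PrefInst U W E) (M N : Finset E) (u : U) : ℤ :=
  if I.mU M u = I.mU N u then 0
  else if I.valU u (I.mU M u) ≤ I.valU u (I.mU N u) then -1 else 1

def supVoteW (I : PrefInst U W E) (M N : Finset E) (w : W) : ℤ :=
  if I.mW M w = I.mW N w then 0
  else if I.valW w (I.mW M w) ≤ I.valW w (I.mW N w) then -1 else 1

/-- γ-vote of `u`: `0` if same partner; `-1` if `p_u(N(u)) ≥ p_u(M(u)) + γ_{N(u)}^u`;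
`+1` otherwise (partner changed without a γ-sized improvement). -/
def gVoteU (I : PrefInst U W E) (γU : E → ℝ) (M N : Finset E) (u : U) : ℤ :=
  if I.mU M u = I.mU N u then 0
  else match I.mU N u with
    | none => 1
    | some e => if I.valU u (I.mU M u) + γU e ≤ I.pU u e then -1 else 1

def gVoteW (I : PrefInst U W E) (γW : E → ℝ) (M N : Finset E) (w : W) : ℤ :=
  if I.mW M w = I.mW N w then 0
  else match I.mW N w with
    | none => 1
    | some e => if I.valW w (I.mW M w) + γW e ≤ I.pW w e then -1 else 1

variable [Fintype U] [Fintype W]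

/-- Popularity (standard votes): `M` never loses a head-to-head comparison. -/
def Popular (I : PrefInst U W E) (M : Finset E) : Prop :=
  ∀ N, I.IsMatching N → 0 ≤ (∑ u, I.sVoteU M N u) + ∑ w, I.sVoteW M N w

/-- Weak popularity. -/
def WeaklyPopular (I : PrefInst U W E) (M : Finset E) : Prop :=
  ∀ N, I.IsMatching N → 0 ≤ (∑ u, I.wVoteU M N u) + ∑ w, I.wVoteW M N w

/-- Super popularity. -/
def SuperPopular (I : PrefInst U W E) (M : Finset E) : Prop :=
  ∀ N, I.IsMatching N → 0 ≤ (∑ u, I.supVoteU M N u) + ∑ w, I.supVoteW M N w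

/-- γ-popularity. -/
def GammaPopular (I : PrefInst U W E) (γU γW : E → ℝ) (M : Finset E) : Prop :=
  ∀ N, I.IsMatching N → 0 ≤ (∑ u, I.gVoteU γU M N u) + ∑ w, I.gVoteW γW M N w

end PrefInst
end


section Aux

open PrefInst

variable {U W E : Type} [DecidableEq U] [DecidableEq W] [DecidableEq E]

lemma mU_of_mem (I : PrefInst U W E) {M : Finset E} (hM : I.IsMatching M)
    {e : E} (he : e ∈ M) : I.mU M (I.src e) = some e := by
  have hfilt : M.filter (fun f => I.src f = I.src e) = {e} := by
    apply Finset.eq_singleton_iff_unique_mem.2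
    refine ⟨Finset.mem_filter.2 ⟨he, rfl⟩, ?_⟩
    intro f hf
    rcases Finset.mem_filter.1 hf with ⟨hfM, hsrc⟩
    by_contra hne
    exact (hM f hfM e he hne).1 hsrc
  simp [PrefInst.mU, hfilt]

lemma mW_of_mem (I : PrefInst U W E) {M : Finset E} (hM : I.IsMatching M)
    {e : E} (he : e ∈ M) : I.mW M (I.dst e) = some e := by
  have hfilt : M.filter (fun f => I.dst f = I.dst e) = {e} := by
    apply Finset.eq_singleton_iff_unique_mem.2
    refine ⟨Finset.mem_filter.2 ⟨he, rfl⟩, ?_⟩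
    intro f hf
    rcases Finset.mem_filter.1 hf with ⟨hfM, hdst⟩
    by_contra hne
    exact (hM f hfM e he hne).2 hdst
  simp [PrefInst.mW, hfilt]

lemma mem_of_mU (I : PrefInst U W E) {M : Finset E} {u : U} {e : E}
    (h : I.mU M u = some e) : e ∈ M ∧ I.src e = u := by
  have : e ∈ (M.filter fun f => I.src f = u).toList := by
    unfold PrefInst.mU at h
    exact List.mem_of_mem_head? (by rw [h]; rfl)
  rcases Finset.mem_filter.1 (Finset.mem_toList.1 this) with ⟨h1, h2⟩
  exact ⟨h1, h2⟩

lemma mem_of_mW (I : PrefInst U W E) {M : Finset E} {w : W} {e : E}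
    (h : I.mW M w = some e) : e ∈ M ∧ I.dst e = w := by
  have : e ∈ (M.filter fun f => I.dst f = w).toList := by
    unfold PrefInst.mW at h
    exact List.mem_of_mem_head? (by rw [h]; rfl)
  rcases Finset.mem_filter.1 (Finset.mem_toList.1 this) with ⟨h1, h2⟩
  exact ⟨h1, h2⟩

lemma gVoteU_cases (I : PrefInst U W E) (γU : E → ℝ) (M N : Finset E) (u : U) :
    I.gVoteU γU M N u = -1 ∨ I.gVoteU γU M N u = 0 ∨ I.gVoteU γU M N u = 1 := by
  unfold PrefInst.gVoteU
  split_ifs with h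
  · tauto
  · rcases hn : I.mU N u with _ | e <;> simp only [hn]
    · tauto
    · split_ifs <;> tauto

lemma gVoteW_cases (I : PrefInst U W E) (γW : E → ℝ) (M N : Finset E) (w : W) :
    I.gVoteW γW M N w = -1 ∨ I.gVoteW γW M N w = 0 ∨ I.gVoteW γW M N w = 1 := by
  unfold PrefInst.gVoteW
  split_ifs with h
  · tauto
  · rcases hn : I.mW N w with _ | e <;> simp only [hn]
    · tauto
    · split_ifs <;> tauto

lemma gVoteU_neg (I : PrefInst U W E) (γU : E → ℝ) (M N : Finset E) (u : U)
    (h : I.gVoteU γU M N u = -1) :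
    ∃ e, I.mU N u = some e ∧ I.mU M u ≠ some e ∧
      I.valU u (I.mU M u) + γU e ≤ I.pU u e := by
  unfold PrefInst.gVoteU at h
  split_ifs at h with h0
  rcases hn : I.mU N u with _ | e <;> simp only [hn] at h
  · simp at h
  · refine ⟨e, rfl, by rw [← hn]; exact h0, ?_⟩
    by_contra hle
    rw [if_neg hle] at h
    simp at h

lemma gVoteW_neg (I : PrefInst U W E) (γW : E → ℝ) (M N : Finset E) (w : W)
    (h : I.gVoteW γW M N w = -1) :
    ∃ e, I.mW N w = some e ∧ I.mW M w ≠ some e ∧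
      I.valW w (I.mW M w) + γW e ≤ I.pW w e := by
  unfold PrefInst.gVoteW at h
  split_ifs at h with h0
  rcases hn : I.mW N w with _ | e <;> simp only [hn] at h
  · simp at h
  · refine ⟨e, rfl, by rw [← hn]; exact h0, ?_⟩
    by_contra hle
    rw [if_neg hle] at h
    simp at h

lemma gVoteU_pos (I : PrefInst U W E) (γU : E → ℝ) (M N : Finset E) (u : U) {e : E}
    (hn : I.mU N u = some e) (hne : I.mU M u ≠ some e)
    (h : ¬ (I.valU u (I.mU M u) + γU e ≤ I.pU u e)) :
    I.gVoteU γU M N u = 1 := by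
  unfold PrefInst.gVoteU
  rw [if_neg (by rw [hn]; exact hne)]
  simp only [hn]
  rw [if_neg h]

lemma gVoteW_pos (I : PrefInst U W E) (γW : E → ℝ) (M N : Finset E) (w : W) {e : E}
    (hn : I.mW N w = some e) (hne : I.mW M w ≠ some e)
    (h : ¬ (I.valW w (I.mW M w) + γW e ≤ I.pW w e)) :
    I.gVoteW γW M N w = 1 := by
  unfold PrefInst.gVoteW
  rw [if_neg (by rw [hn]; exact hne)]
  simp only [hn]
  rw [if_neg h]

lemma sum_eq_card_sub_card {α : Type} [Fintype α] (f : α → ℤ)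
    (h : ∀ x, f x = -1 ∨ f x = 0 ∨ f x = 1) :
    ∑ x, f x = ((Finset.univ.filter fun x => f x = 1).card : ℤ)
      - (Finset.univ.filter fun x => f x = -1).card := by
  have : ∀ x, f x = (if f x = 1 then (1:ℤ) else 0) - (if f x = -1 then 1 else 0) := by
    intro x
    rcases h x with h' | h' | h' <;> rw [h'] <;> norm_num
  calc ∑ x, f x = ∑ x, ((if f x = 1 then (1:ℤ) else 0) - (if f x = -1 then 1 else 0)) :=
        Finset.sum_congr rfl fun x _ => this x
    _ = _ := by rw [Finset.sum_sub_distrib]; simp [Finset.sum_boole]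

end Aux

open PrefInst in
/-- Every γ-min stable matching in a bipartite graph with preference
valuations (nonnegative on edges, with `p_v(∅) ≤ 0`, here `0`) is γ-popular. -/
theorem gamma_min_stable_is_gamma_popular
    {U W E : Type} [DecidableEq U] [DecidableEq W] [DecidableEq E]
    [Fintype U] [Fintype W]
    (I : PrefInst U W E) (γU γW : E → ℝ)
    (hγU : ∀ e, 0 < γU e) (hγW : ∀ e, 0 < γW e)
    (hpU : ∀ u e, 0 ≤ I.pU u e) (hpW : ∀ w e, 0 ≤ I.pW w e)
    (M : Finset E) (hM : I.IsMatching M) (hstable : I.GMinStable γU γW M) :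
    I.GammaPopular γU γW M := by
  intro N hN
  -- sets of negative and positive voters
  set fU : U → ℤ := fun u => I.gVoteU γU M N u with hfU
  set fW : W → ℤ := fun w => I.gVoteW γW M N w with hfW
  -- key: if src endpoint of e∈N votes -1, then dst endpoint votes +1, and vice versa
  have keyU : ∀ u, fU u = -1 → ∃ e, I.mU N u = some e ∧ fW (I.dst e) = 1 := by
    intro u hu
    rcases gVoteU_neg I γU M N u hu with ⟨e, hn, hne, hle⟩
    have heN : e ∈ N := (mem_of_mU I hn).1
    have hsrc : I.src e = u := (mem_of_mU I hn).2
    have heM : e ∉ M := by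
      intro heM
      exact hne (by rw [← hsrc] at hne ⊢; exact mU_of_mem I hM heM)
    have hnW : I.mW N (I.dst e) = some e := mW_of_mem I hN heN
    have hneW : I.mW M (I.dst e) ≠ some e := by
      intro hc; exact heM (mem_of_mW I hc).1
    have hnb := hstable e
    rw [PrefInst.GBlocks] at hnb
    push_neg at hnb
    have hWlt := hnb heM (by rw [hsrc]; exact hle)
    exact ⟨e, hn, gVoteW_pos I γW M N (I.dst e) hnW hneW (not_le_of_gt hWlt)⟩
  have keyW : ∀ w, fW w = -1 → ∃ e, I.mW N w = some e ∧ fU (I.src e) = 1 := by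
    intro w hw
    rcases gVoteW_neg I γW M N w hw with ⟨e, hn, hne, hle⟩
    have heN : e ∈ N := (mem_of_mW I hn).1
    have hdst : I.dst e = w := (mem_of_mW I hn).2
    have heM : e ∉ M := by
      intro heM
      exact hne (by rw [← hdst] at hne ⊢; exact mW_of_mem I hM heM)
    have hnU : I.mU N (I.src e) = some e := mU_of_mem I hN heN
    have hneU : I.mU M (I.src e) ≠ some e := by
      intro hc; exact heM (mem_of_mU I hc).1
    have hnb := hstable e
    rw [PrefInst.GBlocks] at hnb
    push_neg at hnb
    by_contra hcon
    have hWle : I.valW (I.dst e) (I.mW M (I.dst e)) + γW e ≤ I.pW (I.dst e) e := by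
      rw [hdst]; exact hle
    -- either U side votes +1 (done) or the U-inequality holds (blocking - contradiction)
    rcases gVoteU_cases I γU M N (I.src e) with hU | hU | hU
    · rcases gVoteU_neg I γU M N (I.src e) hU with ⟨e', hn', hne', hle'⟩
      rw [hnU] at hn'
      have : e' = e := by injection hn'.symm
      subst this
      exact absurd hWle (not_le_of_gt (hnb heM hle'))
    · -- vote 0 means mU M = mU N = some e, so e ∈ M, contradiction
      have : I.mU M (I.src e) = I.mU N (I.src e) := by
        by_contra hdiff
        unfold PrefInst.gVoteU at hU
        rw [if_neg hdiff] at hU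
        simp only [hnU] at hU
        split_ifs at hU <;> simp at hU
      exact hneU (this.trans hnU)
    · exact hcon ⟨e, hn, hU⟩
  -- counting
  have hsumU := sum_eq_card_sub_card fU (gVoteU_cases I γU M N)
  have hsumW := sum_eq_card_sub_card fW (gVoteW_cases I γW M N)
  set PU := Finset.univ.filter fun u => fU u = 1 with hPU
  set NU := Finset.univ.filter fun u => fU u = -1 with hNU
  set PW := Finset.univ.filter fun w => fW w = 1 with hPW
  set NW := Finset.univ.filter fun w => fW w = -1 with hNW
  -- injection NU → PW
  have hinj1 : NU.card ≤ PW.card := by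
    have hch : ∀ u ∈ NU, ∃ e, I.mU N u = some e ∧ fW (I.dst e) = 1 := fun u hu =>
      keyU u (Finset.mem_filter.1 hu).2
    choose g hg1 hg2 using hch
    rcases NU.eq_empty_or_nonempty with hemp | ⟨u0, hu0⟩
    · simp [hemp]
    have : Nonempty W := ⟨I.dst (g u0 hu0)⟩
    apply Finset.card_le_card_of_injOn (fun u => if h : u ∈ NU then I.dst (g u h) else Classical.arbitrary W) ?_ ?_
    · intro u hu
      simp only [dif_pos hu]
      exact Finset.mem_filter.2 ⟨Finset.mem_univ _, by rw [dif_pos (show u ∈ NU from hu)]; exact hg2 u hu⟩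
    · intro u1 h1 u2 h2 heq
      simp only [Finset.mem_coe] at h1 h2
      simp only [dif_pos h1, dif_pos h2] at heq
      have he1 : g u1 h1 ∈ N := (mem_of_mU I (hg1 u1 h1)).1
      have he2 : g u2 h2 ∈ N := (mem_of_mU I (hg1 u2 h2)).1
      have hee : g u1 h1 = g u2 h2 := by
        by_contra hne
        exact (hN _ he1 _ he2 hne).2 heq
      have := (mem_of_mU I (hg1 u1 h1)).2
      rw [hee, (mem_of_mU I (hg1 u2 h2)).2] at this
      exact this.symm
  -- injection NW → PU
  have hinj2 : NW.card ≤ PU.card := by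
    have hch : ∀ w ∈ NW, ∃ e, I.mW N w = some e ∧ fU (I.src e) = 1 := fun w hw =>
      keyW w (Finset.mem_filter.1 hw).2
    choose g hg1 hg2 using hch
    rcases NW.eq_empty_or_nonempty with hemp | ⟨w0, hw0⟩
    · simp [hemp]
    have : Nonempty U := ⟨I.src (g w0 hw0)⟩
    apply Finset.card_le_card_of_injOn (fun w => if h : w ∈ NW then I.src (g w h) else Classical.arbitrary U) ?_ ?_
    · intro w hw
      simp only [dif_pos hw]
      exact Finset.mem_filter.2 ⟨Finset.mem_univ _, by rw [dif_pos (show w ∈ NW from hw)]; exact hg2 w hw⟩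
    · intro w1 h1 w2 h2 heq
      simp only [Finset.mem_coe] at h1 h2
      simp only [dif_pos h1, dif_pos h2] at heq
      have he1 : g w1 h1 ∈ N := (mem_of_mW I (hg1 w1 h1)).1
      have he2 : g w2 h2 ∈ N := (mem_of_mW I (hg1 w2 h2)).1
      have hee : g w1 h1 = g w2 h2 := by
        by_contra hne
        exact (hN _ he1 _ he2 hne).1 heq
      have := (mem_of_mW I (hg1 w1 h1)).2
      rw [hee, (mem_of_mW I (hg1 w2 h2)).2] at this
      exact this.symm
  show (0:ℤ) ≤ (∑ u, fU u) + ∑ w, fW w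
  rw [hsumU, hsumW]
  push_cast
  omega
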